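/- Let γ ∈ ℂ be transcendental over ℚ. For all x₁, y₁, x₂, y₂ ∈ K = ℚ(ζ₈, √5) with (x₁, y₁) ≠ (0, 0) and (x₂, y₂) ≠ (0, 0), the 4×4 complex matrix X with 2×2 blocks X = [[Ξ(x₁, y₁), τ(Ξ(x₁, y₁))], [γ·Ξ(x₂, y₂), τ(Ξ(x₂, y₂))]] has nonzero determinant. (The determinant is a polynomial in γ with coefficients in the number field K and nonzero constant term, hence cannot vanish at a transcendental γ.) -/

import Mathlib

open Complex Matrix

/-- The eighth root of unity `ζ₈ = e^{iπ/4}`. -/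
noncomputable def ζ₈ : ℂ := Complex.exp (Real.pi * Complex.I / 4)

/-- The golden ratio `θ = (1+√5)/2` as a complex number. -/
noncomputable def θ : ℂ := (((1 + Real.sqrt 5) / 2 : ℝ) : ℂ)

/-- Its conjugate `θ̄ = (1−√5)/2` as a complex number. -/
noncomputable def θbar : ℂ := (((1 - Real.sqrt 5) / 2 : ℝ) : ℂ)

/-- The subfield `ℚ(i) = {p + q·i : p, q ∈ ℚ}` of `ℂ`, as a set. -/
def Qi : Set ℂ := {z | ∃ p q : ℚ, z = (p : ℂ) + (q : ℂ) * Complex.I}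

/-- The element `x = x₀ + x₁ζ₈ + x₂θ + x₃ζ₈θ` of `K = ℚ(ζ₈, √5)` with coordinates
`x₀, x₁, x₂, x₃ ∈ ℚ(i)` over the basis `(1, ζ₈, θ, ζ₈θ)`. -/
noncomputable def emb (a : Fin 4 → ℂ) : ℂ := a 0 + a 1 * ζ₈ + a 2 * θ + a 3 * ζ₈ * θ

/-- `σ(x) = x₀ + x₁ζ₈ + x₂θ̄ + x₃ζ₈θ̄` (the automorphism `σ` fixes `ℚ(ζ₈)`, `σ(√5) = −√5`). -/
noncomputable def embσ (a : Fin 4 → ℂ) : ℂ := a 0 + a 1 * ζ₈ + a 2 * θbar + a 3 * ζ₈ * θbar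

/-- `τ(x) = x₀ − x₁ζ₈ + x₂θ − x₃ζ₈θ` (the automorphism `τ` fixes `√5`, `τ(ζ₈) = −ζ₈`). -/
noncomputable def embτ (a : Fin 4 → ℂ) : ℂ := a 0 - a 1 * ζ₈ + a 2 * θ - a 3 * ζ₈ * θ

/-- `τ(σ(x)) = σ(τ(x)) = x₀ − x₁ζ₈ + x₂θ̄ − x₃ζ₈θ̄`. -/
noncomputable def embστ (a : Fin 4 → ℂ) : ℂ := a 0 - a 1 * ζ₈ + a 2 * θbar - a 3 * ζ₈ * θbar

/-- The Golden-code codeword matrix `Ξ(x, y) = [[x, y], [ζ₈·σ(y), σ(x)]]`. -/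
noncomputable def Xi (a b : Fin 4 → ℂ) : Matrix (Fin 2) (Fin 2) ℂ :=
  !![emb a, emb b; ζ₈ * embσ b, embσ a]

/-- The entrywise image `τ(Ξ(x, y)) = [[τ(x), τ(y)], [τ(ζ₈)·τ(σ(y)), τ(σ(x))]]`
`= [[τ(x), τ(y)], [−ζ₈·στ(y), στ(x)]]`. -/
noncomputable def tauXi (a b : Fin 4 → ℂ) : Matrix (Fin 2) (Fin 2) ℂ :=
  !![embτ a, embτ b; -ζ₈ * embστ b, embστ a]

section AuxProofs
open Polynomial

lemma zeta_prim : IsPrimitiveRoot ζ₈ 8 := by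
  have h := Complex.isPrimitiveRoot_exp 8 (by norm_num)
  convert h using 2
  unfold ζ₈
  congr 1
  push_cast
  ring

lemma zeta_pow4 : ζ₈ ^ 4 = -1 := by
  have : ζ₈ ^ 4 = Complex.exp (Real.pi * Complex.I) := by
    unfold ζ₈; rw [← Complex.exp_nat_mul]; congr 1; ring
  rw [this, Complex.exp_pi_mul_I]

lemma zeta_sq : ζ₈ ^ 2 = Complex.I := by
  have : ζ₈ ^ 2 = Complex.exp ((Real.pi / 2 : ℝ) * Complex.I) := by
    unfold ζ₈; rw [← Complex.exp_nat_mul]; congr 1; push_cast; ring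
  rw [this, Complex.exp_mul_I]
  simp [Real.cos_pi_div_two, Real.sin_pi_div_two]

lemma theta_add : θ + θbar = 1 := by
  unfold θ θbar; push_cast; ring

lemma theta_mul : θ * θbar = -1 := by
  unfold θ θbar
  have h5 : Real.sqrt 5 ^ 2 = 5 := Real.sq_sqrt (by norm_num)
  have key : ((1 + Real.sqrt 5) / 2) * ((1 - Real.sqrt 5) / 2) = (-1 : ℝ) := by nlinarith [h5]
  rw [← Complex.ofReal_mul, key]
  norm_num

lemma minpoly_deg : (minpoly ℚ ζ₈).natDegree = 4 := by
  rw [← zeta_prim.minpoly_eq_cyclotomic_of_irreducible]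
  · simp only [Polynomial.natDegree_cyclotomic]
    decide
  · exact Polynomial.cyclotomic.irreducible_rat (by norm_num)

/-- linear independence of `1, ζ₈, ζ₈², ζ₈³` over ℚ. -/
lemma LIN (c : Fin 4 → ℚ) (h : (c 0 : ℂ) + c 1 * ζ₈ + c 2 * ζ₈ ^ 2 + c 3 * ζ₈ ^ 3 = 0) :
    c = 0 := by
  by_contra hc
  set g : ℚ[X] := C (c 0) + C (c 1) * X + C (c 2) * X ^ 2 + C (c 3) * X ^ 3 with hg
  have hg0 : g ≠ 0 := by
    intro h0
    apply hc
    funext i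
    have hco := fun n => congrArg (fun p => Polynomial.coeff p n) h0
    simp only [hg, Polynomial.coeff_add, Polynomial.coeff_C,
      Polynomial.coeff_C_mul, Polynomial.coeff_X_pow, Polynomial.coeff_X,
      Polynomial.coeff_zero] at hco
    fin_cases i
    · simpa using hco 0
    · simpa using hco 1
    · simpa using hco 2
    · simpa using hco 3
  have haev : Polynomial.aeval ζ₈ g = 0 := by
    simp only [hg, map_add, _root_.map_mul, map_pow, Polynomial.aeval_C, Polynomial.aeval_X]
    simpa using h
  have hdeg' := minpoly.degree_le_of_ne_zero ℚ ζ₈ hg0 haev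
  have hdeg : (minpoly ℚ ζ₈).natDegree ≤ g.natDegree := by
    apply Polynomial.natDegree_le_natDegree hdeg' 
  have hdg : g.natDegree ≤ 3 := by
    apply Polynomial.natDegree_add_le_of_degree_le
    · apply Polynomial.natDegree_add_le_of_degree_le
      · apply Polynomial.natDegree_add_le_of_degree_le
        · exact (Polynomial.natDegree_C _).le.trans (by norm_num)
        · exact (Polynomial.natDegree_C_mul_le _ _).trans (by simp)
      · exact (Polynomial.natDegree_C_mul_le _ _).trans (by simp)
    · exact (Polynomial.natDegree_C_mul_le _ _).trans (by simp)
  rw [minpoly_deg] at hdeg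
  omega
noncomputable section
open Polynomial

/-- the defining polynomial `X⁴+1` over ℤ -/
def q4 : ℤ[X] := X ^ 4 + 1

lemma q4_monic : q4.Monic := by
  unfold q4
  apply Polynomial.monic_X_pow_add
  simpa using Polynomial.degree_one_le.trans (by norm_num)

/-- `B = ℤ[X]/(X⁴+1)` -/
def B := AdjoinRoot q4

instance : CommRing B := by unfold B; infer_instance

def rB : B := AdjoinRoot.root q4

lemma rB_pow4 : rB ^ 4 = -1 := by
  have h := AdjoinRoot.eval₂_root q4
  have : (AdjoinRoot.mk q4) q4 = 0 := AdjoinRoot.mk_self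
  unfold q4 at this
  rw [map_add, map_pow, _root_.map_one] at this
  have h2 : rB ^ 4 + 1 = 0 := this
  linear_combination h2

/-- integer-coordinate element of B -/
def ι (m : Fin 4 → ℤ) : B :=
  (m 0 : B) + (m 1 : B) * rB + (m 2 : B) * rB ^ 2 + (m 3 : B) * rB ^ 3

lemma ι_surj (b : B) : ∃ m : Fin 4 → ℤ, b = ι m := by
  obtain ⟨f, rfl⟩ := AdjoinRoot.mk_surjective (g := q4) b
  set g := f %ₘ q4 with hgdef
  have hmk : AdjoinRoot.mk q4 f = AdjoinRoot.mk q4 g := by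
    rw [hgdef, Polynomial.modByMonic_eq_sub_mul_div f q4]
    rw [map_sub, _root_.map_mul]
    simp [AdjoinRoot.mk_self]
  have hq4deg : q4.natDegree = 4 := by
    unfold q4
    have : (X ^ 4 + 1 : ℤ[X]) = X ^ 4 + C 1 := by simp
    rw [this, Polynomial.natDegree_X_pow_add_C]
  have hdeg : g.natDegree < 4 := by
    have h1 : q4 ≠ 1 := by
      intro h
      have := congrArg Polynomial.natDegree h
      rw [hq4deg] at this
      simp at this
    have := Polynomial.natDegree_modByMonic_lt f q4_monic h1
    simpa [← hgdef, hq4deg] using this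
  refine ⟨![g.coeff 0, g.coeff 1, g.coeff 2, g.coeff 3], ?_⟩
  rw [hmk, ← AdjoinRoot.aeval_eq]
  rw [Polynomial.aeval_eq_sum_range' (n := 4) hdeg]
  unfold ι rB
  rw [Finset.sum_range_succ, Finset.sum_range_succ, Finset.sum_range_succ,
    Finset.sum_range_one]
  simp only [Matrix.cons_val_zero, Matrix.cons_val_one, Matrix.head_cons,
    Matrix.cons_val_two, Matrix.tail_cons, Matrix.cons_val_three]
  push_cast [zsmul_eq_mul]
  unfold B at *
  ring

/-- the embedding of `B` into ℂ sending `rB` to `z`, for `z⁴ = −1`. -/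
def φ (z : ℂ) (hz : z ^ 4 = -1) : B →+* ℂ :=
  AdjoinRoot.lift (Int.castRingHom ℂ) z (by
    unfold q4
    rw [Polynomial.eval₂_add, Polynomial.eval₂_pow, Polynomial.eval₂_one,
      Polynomial.eval₂_X, hz]
    ring)

lemma φ_root (z : ℂ) (hz : z ^ 4 = -1) : φ z hz rB = z := AdjoinRoot.lift_root _

lemma φ_int (z : ℂ) (hz : z ^ 4 = -1) (n : ℤ) : φ z hz (n : B) = (n : ℂ) :=
  map_intCast _ _

lemma φ_ι (z : ℂ) (hz : z ^ 4 = -1) (m : Fin 4 → ℤ) :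
    φ z hz (ι m) = (m 0 : ℂ) + (m 1 : ℂ) * z + (m 2 : ℂ) * z ^ 2 + (m 3 : ℂ) * z ^ 3 := by
  unfold ι
  rw [map_add, map_add, map_add, _root_.map_mul, _root_.map_mul, _root_.map_mul,
    map_pow, map_pow, φ_root, φ_int, φ_int, φ_int, φ_int]

/-- sign parameter: `z = ζ₈` or `z = -ζ₈` -/
lemma zsign_pow4 {z : ℂ} (hz : z = ζ₈ ∨ z = -ζ₈) : z ^ 4 = -1 := by
  rcases hz with h | h
  · rw [h]; exact zeta_pow4
  · rw [h, show (-ζ₈) ^ 4 = ζ₈ ^ 4 by ring]; exact zeta_pow4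

/-- linear independence over ℚ for both signs -/
lemma LIN' {z : ℂ} (hz : z = ζ₈ ∨ z = -ζ₈) (c : Fin 4 → ℚ)
    (h : (c 0 : ℂ) + c 1 * z + c 2 * z ^ 2 + c 3 * z ^ 3 = 0) : c = 0 := by
  rcases hz with rfl | rfl
  · exact LIN c h
  · have h2 : ((![c 0, -c 1, c 2, -c 3] : Fin 4 → ℚ) 0 : ℂ)
        + (![c 0, -c 1, c 2, -c 3] : Fin 4 → ℚ) 1 * ζ₈
        + (![c 0, -c 1, c 2, -c 3] : Fin 4 → ℚ) 2 * ζ₈ ^ 2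
        + (![c 0, -c 1, c 2, -c 3] : Fin 4 → ℚ) 3 * ζ₈ ^ 3 = 0 := by
      simp only [Matrix.cons_val_zero, Matrix.cons_val_one, Matrix.head_cons,
        Matrix.cons_val_two, Matrix.tail_cons, Matrix.cons_val_three]
      push_cast
      linear_combination h
    have := LIN _ h2
    funext i
    have hi := congrFun this i
    fin_cases i <;> simp_all
    

lemma ι_inj {z : ℂ} (hz : z = ζ₈ ∨ z = -ζ₈) (m : Fin 4 → ℤ)
    (h : φ z (zsign_pow4 hz) (ι m) = 0) : m = 0 := by
  rw [φ_ι] at h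
  have h2 : (((fun i => (m i : ℚ)) : Fin 4 → ℚ) 0 : ℂ) + ((fun i => (m i : ℚ)) : Fin 4 → ℚ) 1 * z
      + ((fun i => (m i : ℚ)) : Fin 4 → ℚ) 2 * z ^ 2
      + ((fun i => (m i : ℚ)) : Fin 4 → ℚ) 3 * z ^ 3 = 0 := by
    push_cast
    linear_combination h
  have := LIN' hz (fun i => (m i : ℚ)) h2
  funext i
  have hi := congrFun this i
  simpa using hi

lemma φ_inj {z : ℂ} (hz : z = ζ₈ ∨ z = -ζ₈) :
    Function.Injective (φ z (zsign_pow4 hz)) := by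
  rw [injective_iff_map_eq_zero]
  intro b hb
  obtain ⟨m, rfl⟩ := ι_surj b
  rw [ι_inj hz m hb]
  simp [ι]

/-- cancellation of nonzero integers in B -/
lemma int_cancel {k : ℤ} (hk : k ≠ 0) {x : B} (h : (k : B) * x = 0) : x = 0 := by
  have := congrArg (φ ζ₈ (zsign_pow4 (Or.inl rfl))) h
  rw [_root_.map_mul, map_zero, φ_int] at this
  have hx : φ ζ₈ (zsign_pow4 (Or.inl rfl)) x = 0 := by
    rcases mul_eq_zero.1 this with h' | h'
    · exact absurd (by exact_mod_cast h') hk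
    · exact h'
  exact φ_inj (Or.inl rfl) (by simpa using hx)

/-- an element of B divisible by all powers of 5 is zero -/
lemma five_pow_zero {x : B} (h : ∀ n : ℕ, ∃ y : B, x = 5 ^ n * y) : x = 0 := by
  obtain ⟨m, rfl⟩ := ι_surj x
  by_contra hm0
  have hm : m ≠ 0 := by
    rintro rfl
    apply hm0
    simp [ι]
  obtain ⟨i, hi⟩ : ∃ i, m i ≠ 0 := by
    by_contra hc
    push_neg at hc
    exact hm (funext fun i => hc i)
  -- get divisibility of coordinates
  have key : ∀ n : ℕ, (5 : ℤ) ^ n ∣ m i := by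
    intro n
    obtain ⟨y, hy⟩ := h n
    obtain ⟨m', rfl⟩ := ι_surj y
    have h5 : (5 : B) ^ n * ι m' = ι (fun j => 5 ^ n * m' j) := by
      unfold ι
      push_cast
      ring
    rw [h5] at hy
    have : ι (fun j => m j - 5 ^ n * m' j) = 0 := by
      unfold ι at hy ⊢
      push_cast at hy ⊢
      linear_combination hy
    have hz := ι_inj (Or.inl rfl) _ (by rw [this]; simp)
    have := congrFun hz i
    simp only [Pi.zero_apply, sub_eq_zero] at this
    exact ⟨m' i, this⟩
  have hdvd : (5 : ℤ) ^ (m i).natAbs ∣ |m i| := (dvd_abs _ _).2 (key _)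
  have hle : (5 : ℤ) ^ (m i).natAbs ≤ |m i| := Int.le_of_dvd (abs_pos.2 hi) hdvd
  have hlt : ((m i).natAbs : ℤ) < 5 ^ (m i).natAbs := by
    exact_mod_cast Nat.lt_pow_self (n := (m i).natAbs) (by norm_num : 1 < 5)
  rw [Int.abs_eq_natAbs] at hle
  omega
open Polynomial

noncomputable section

instance : Fact (Nat.Prime 5) := ⟨by norm_num⟩

/-- quadratic `X² − C a` over `ZMod 5` -/
def g5 (a : ZMod 5) : (ZMod 5)[X] := X ^ 2 - C a

lemma g5_irr {a : ZMod 5} (ha : ∀ b : ZMod 5, b ^ 2 ≠ a) : Irreducible (g5 a) :=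
  X_pow_sub_C_irreducible_of_prime Nat.prime_two ha

def sF (a : ZMod 5) : AdjoinRoot (g5 a) := AdjoinRoot.root (g5 a)

lemma sF_sq (a : ZMod 5) : sF a ^ 2 = algebraMap (ZMod 5) (AdjoinRoot (g5 a)) a := by
  have : (AdjoinRoot.mk (g5 a)) (g5 a) = 0 := AdjoinRoot.mk_self
  unfold g5 at this
  rw [map_sub, map_pow, AdjoinRoot.mk_X, AdjoinRoot.mk_C] at this
  unfold sF
  rw [sub_eq_zero] at this
  exact this

lemma F_card {a : ZMod 5} (ha : ∀ b : ZMod 5, b ^ 2 ≠ a) :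
    ∃ _ : Fintype (AdjoinRoot (g5 a)), Fintype.card (AdjoinRoot (g5 a)) = 25 := by
  have hI : Fact (Irreducible (g5 a)) := ⟨g5_irr ha⟩
  have hne : g5 a ≠ 0 := hI.out.ne_zero
  let pb := AdjoinRoot.powerBasis hne
  have hdim : pb.dim = 2 := by
    show (g5 a).natDegree = 2
    unfold g5
    rw [Polynomial.natDegree_X_pow_sub_C]
  let ft : Fintype (AdjoinRoot (g5 a)) := Module.fintypeOfFintype pb.basis
  refine ⟨ft, ?_⟩
  rw [Module.card_fintype pb.basis]
  simp [hdim, ZMod.card]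

/-- in a field with 25 elements, an element with `c¹² = −1` is not a square ratio -/
lemma sq_eq_nonsq {Fq : Type*} [Field Fq] [Fintype Fq] (hcard : Fintype.card Fq = 25)
    (h2 : (2 : Fq) ≠ 0) {c A B : Fq} (hc : c ^ 12 = -1) (h : A ^ 2 = c * B ^ 2) :
    A = 0 ∧ B = 0 := by
  have hB : B = 0 := by
    by_contra hB0
    have hcsq : c = (A * B⁻¹) ^ 2 := by
      rw [mul_pow, h, inv_pow]
      field_simp
    rcases eq_or_ne A 0 with hA0 | hA0
    · rw [hA0, zero_mul, zero_pow (by norm_num)] at hcsq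
      rw [hcsq] at hc
      simp only [zero_pow, ne_eq, OfNat.ofNat_ne_zero, not_false_eq_true] at hc
      exact one_ne_zero (α := Fq) (by linear_combination hc)
    · have hAB : A * B⁻¹ ≠ 0 := mul_ne_zero hA0 (inv_ne_zero hB0)
      have := FiniteField.pow_card_sub_one_eq_one (A * B⁻¹) hAB
      rw [hcard] at this
      have h24 : c ^ 12 = 1 := by
        rw [hcsq, ← pow_mul]
        exact this
      rw [hc] at h24
      exact h2 (by linear_combination -h24)
  refine ⟨?_, hB⟩
  rw [hB] at h
  simpa using pow_eq_zero_iff (n := 2) (by norm_num) |>.1 (by simpa using h)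

/-- the reduction map `B → 𝔽₂₅` (component `a`, where `a² = −1` in `ZMod 5`) -/
def ψ (a : ZMod 5) (ha : a ^ 2 = -1) : B →+* AdjoinRoot (g5 a) :=
  AdjoinRoot.lift (Int.castRingHom _) (sF a) (by
    unfold q4
    rw [Polynomial.eval₂_add, Polynomial.eval₂_pow, Polynomial.eval₂_one,
      Polynomial.eval₂_X]
    have : sF a ^ 4 = algebraMap (ZMod 5) _ (a ^ 2) := by
      rw [show (4 : ℕ) = 2 * 2 from rfl, pow_mul, sF_sq, ← _root_.map_pow]
    rw [this, ha]
    simp)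

lemma ψ_root (a : ZMod 5) (ha : a ^ 2 = -1) : ψ a ha rB = sF a := AdjoinRoot.lift_root _

lemma ψ_five (a : ZMod 5) (ha : a ^ 2 = -1) : ψ a ha 5 = 0 := by
  have h1 : ((5 : ℤ) : B) = (5 : B) := by push_cast; ring
  rw [← h1, map_intCast]
  have h2 : ((5 : ℤ) : AdjoinRoot (g5 a)) = algebraMap (ZMod 5) _ ((5 : ℤ) : ZMod 5) :=
    (map_intCast (algebraMap (ZMod 5) (AdjoinRoot (g5 a))) 5).symm
  rw [h2, show ((5 : ℤ) : ZMod 5) = 0 by decide, map_zero]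

/-- Chinese remainder: killed by both components means divisible by 5 -/
lemma crt (x : B) (h3 : ψ 3 (by decide) x = 0) (h2 : ψ 2 (by decide) x = 0) :
    ∃ y : B, x = 5 * y := by
  obtain ⟨f, rfl⟩ := AdjoinRoot.mk_surjective (g := q4) x
  have hcast : ∀ (a : ZMod 5) (ha : a ^ 2 = -1),
      ψ a ha (AdjoinRoot.mk q4 f) = AdjoinRoot.mk (g5 a) (f.map (Int.castRingHom (ZMod 5))) := by
    intro a ha
    rw [show ψ a ha (AdjoinRoot.mk q4 f) = Polynomial.eval₂ (Int.castRingHom _) (sF a) f from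
      AdjoinRoot.lift_mk _ f]
    rw [← AdjoinRoot.aeval_eq, Polynomial.aeval_def, Polynomial.eval₂_map]
    congr 1
  rw [hcast 3 (by decide), AdjoinRoot.mk_eq_zero] at h3
  rw [hcast 2 (by decide), AdjoinRoot.mk_eq_zero] at h2
  have hco : IsCoprime (g5 3) (g5 2) := by
    refine ⟨-1, 1, ?_⟩
    unfold g5
    have h32 : (Polynomial.C (3 : ZMod 5) - Polynomial.C 2 : (ZMod 5)[X]) = 1 := by
      rw [← Polynomial.C_sub]
      norm_num
    linear_combination h32
  have hdvd : g5 3 * g5 2 ∣ f.map (Int.castRingHom (ZMod 5)) := hco.mul_dvd h3 h2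
  have hprod : g5 3 * g5 2 = q4.map (Int.castRingHom (ZMod 5)) := by
    unfold g5 q4
    rw [Polynomial.map_add, Polynomial.map_pow, Polynomial.map_X, Polynomial.map_one]
    have h6 : (Polynomial.C (3 : ZMod 5)) * Polynomial.C 2 = 1 := by
      rw [← Polynomial.C_mul, show ((3 : ZMod 5) * 2) = 1 by decide, Polynomial.C_1]
    have h5 : (Polynomial.C (3 : ZMod 5)) + Polynomial.C 2 = 0 := by
      rw [← Polynomial.C_add, show ((3 : ZMod 5) + 2) = 0 by decide, Polynomial.C_0]
    linear_combination h6 - Polynomial.X ^ 2 * h5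
  rw [hprod] at hdvd
  obtain ⟨h', hh'⟩ := hdvd
  obtain ⟨h, rfl⟩ := Polynomial.map_surjective (Int.castRingHom (ZMod 5))
    ZMod.intCast_surjective h'
  have hd : (f - q4 * h).map (Int.castRingHom (ZMod 5)) = 0 := by
    rw [Polynomial.map_sub, Polynomial.map_mul, hh']
    ring
  have hC5 : Polynomial.C (5 : ℤ) ∣ f - q4 * h := by
    rw [Polynomial.C_dvd_iff_dvd_coeff]
    intro n
    have := congrArg (fun p => Polynomial.coeff p n) hd
    simp only [Polynomial.coeff_map, Polynomial.coeff_zero] at this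
    exact_mod_cast (ZMod.intCast_zmod_eq_zero_iff_dvd _ 5).1 this
  obtain ⟨e, he⟩ := hC5
  refine ⟨AdjoinRoot.mk q4 e, ?_⟩
  have : f = q4 * h + Polynomial.C 5 * e := by linear_combination he
  rw [this, map_add, _root_.map_mul, _root_.map_mul, AdjoinRoot.mk_self, zero_mul,
    zero_add, AdjoinRoot.mk_C]
  norm_num
  rfl

/-- the key mod-5 step -/
lemma key5 (x y w : B) (h : x ^ 2 = rB * y ^ 2 + 5 * w) :
    (∃ x', x = 5 * x') ∧ (∃ y', y = 5 * y') := by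
  have main : ∀ (a : ZMod 5) (ha : a ^ 2 = -1) (ha' : ∀ b : ZMod 5, b ^ 2 ≠ a)
      (ha6 : a ^ 6 = -1), ψ a ha x = 0 ∧ ψ a ha y = 0 := by
    intro a ha ha' ha6
    haveI : Fact (Irreducible (g5 a)) := ⟨g5_irr ha'⟩
    obtain ⟨ft, hcard⟩ := F_card ha'
    have heq := congrArg (ψ a ha) h
    rw [_root_.map_add, _root_.map_mul, _root_.map_mul, map_pow, map_pow, ψ_five,
      ψ_root, zero_mul, add_zero] at heq
    have hc12 : sF a ^ 12 = -1 := by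
      rw [show (12 : ℕ) = 2 * 6 from rfl, pow_mul, sF_sq, ← _root_.map_pow, ha6]
      simp
    have h2' : (2 : AdjoinRoot (g5 a)) ≠ 0 := by
      have hinj : Function.Injective (algebraMap (ZMod 5) (AdjoinRoot (g5 a))) :=
        (algebraMap (ZMod 5) (AdjoinRoot (g5 a))).injective
      intro h0
      have h00 : algebraMap (ZMod 5) (AdjoinRoot (g5 a)) 2 = algebraMap (ZMod 5) (AdjoinRoot (g5 a)) 0 := by
        rw [map_ofNat, map_zero]
        exact h0
      exact (by decide : (2 : ZMod 5) ≠ 0) (hinj h00)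
    exact sq_eq_nonsq hcard h2' hc12 heq
  obtain ⟨hx3, hy3⟩ := main 3 (by decide) (by decide) (by decide)
  obtain ⟨hx2, hy2⟩ := main 2 (by decide) (by decide) (by decide)
  exact ⟨crt x hx3 hx2, crt y hy3 hy2⟩

lemma E2_step (U v S t : B) (h : U ^ 2 - 5 * v ^ 2 = rB * (S ^ 2 - 5 * t ^ 2)) :
    ∃ U' v' S' t' : B, U = 5 * U' ∧ v = 5 * v' ∧ S = 5 * S' ∧ t = 5 * t' ∧
      U' ^ 2 - 5 * v' ^ 2 = rB * (S' ^ 2 - 5 * t' ^ 2) := by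
  obtain ⟨⟨U₀, hU⟩, ⟨S₀, hS⟩⟩ := key5 U S (v ^ 2 - rB * t ^ 2) (by linear_combination h)
  have hmid : 5 * U₀ ^ 2 - v ^ 2 = rB * (5 * S₀ ^ 2 - t ^ 2) := by
    have h5 : (5 : B) * (5 * U₀ ^ 2 - v ^ 2 - rB * (5 * S₀ ^ 2 - t ^ 2)) = 0 := by
      rw [hU, hS] at h
      linear_combination h
    have := int_cancel (k := 5) (by norm_num) (x := 5 * U₀ ^ 2 - v ^ 2 - rB * (5 * S₀ ^ 2 - t ^ 2))
      (by push_cast; linear_combination h5)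
    linear_combination this
  obtain ⟨⟨v', hv⟩, ⟨t', ht⟩⟩ := key5 v t (U₀ ^ 2 - rB * S₀ ^ 2) (by linear_combination -hmid)
  refine ⟨U₀, v', S₀, t', hU, hv, hS, ht, ?_⟩
  have h5 : (5 : B) * (U₀ ^ 2 - 5 * v' ^ 2 - rB * (S₀ ^ 2 - 5 * t' ^ 2)) = 0 := by
    rw [hv, ht] at hmid
    linear_combination hmid
  have := int_cancel (k := 5) (by norm_num) (x := U₀ ^ 2 - 5 * v' ^ 2 - rB * (S₀ ^ 2 - 5 * t' ^ 2))
    (by push_cast; linear_combination h5)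
  linear_combination this

lemma E2_zero (U v S t : B) (h : U ^ 2 - 5 * v ^ 2 = rB * (S ^ 2 - 5 * t ^ 2)) :
    U = 0 ∧ v = 0 ∧ S = 0 ∧ t = 0 := by
  have key : ∀ n : ℕ, ∃ U' v' S' t' : B, U = 5 ^ n * U' ∧ v = 5 ^ n * v' ∧ S = 5 ^ n * S' ∧
      t = 5 ^ n * t' ∧ U' ^ 2 - 5 * v' ^ 2 = rB * (S' ^ 2 - 5 * t' ^ 2) := by
    intro n
    induction n with
    | zero => exact ⟨U, v, S, t, by simp, by simp, by simp, by simp, h⟩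
    | succ n ih =>
      obtain ⟨U', v', S', t', hU, hv, hS, ht, heq⟩ := ih
      obtain ⟨U'', v'', S'', t'', hU', hv', hS', ht', heq'⟩ := E2_step U' v' S' t' heq
      exact ⟨U'', v'', S'', t'', by rw [hU, hU']; ring, by rw [hv, hv']; ring,
        by rw [hS, hS']; ring, by rw [ht, ht']; ring, heq'⟩
  have hz : ∀ x : B, (∀ n : ℕ, ∃ y : B, x = 5 ^ n * y) → x = 0 := fun x hx => five_pow_zero hx
  refine ⟨hz U fun n => ?_, hz v fun n => ?_, hz S fun n => ?_, hz t fun n => ?_⟩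
  · obtain ⟨U', v', S', t', hU, _, _, _, _⟩ := key n; exact ⟨U', hU⟩
  · obtain ⟨U', v', S', t', _, hv, _, _, _⟩ := key n; exact ⟨v', hv⟩
  · obtain ⟨U', v', S', t', _, _, hS, _, _⟩ := key n; exact ⟨S', hS⟩
  · obtain ⟨U', v', S', t', _, _, _, ht, _⟩ := key n; exact ⟨t', ht⟩

lemma E1_zero (u v s t : B) (h : u ^ 2 + u * v - v ^ 2 = rB * (s ^ 2 + s * t - t ^ 2)) :
    u = 0 ∧ v = 0 ∧ s = 0 ∧ t = 0 := by
  obtain ⟨hU, hv, hS, ht⟩ := E2_zero (2 * u + v) v (2 * s + t) t (by linear_combination 4 * h)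
  have hu : u = 0 := by
    have h2 : ((2 : ℤ) : B) * u = 0 := by
      push_cast
      linear_combination hU - hv
    exact int_cancel (by norm_num) h2
  have hs : s = 0 := by
    have h2 : ((2 : ℤ) : B) * s = 0 := by
      push_cast
      linear_combination hS - ht
    exact int_cancel (by norm_num) h2
  exact ⟨hu, hv, hs, ht⟩

/-- evaluation of rational coordinates at a power basis of `z` -/
def evz (z : ℂ) (c : Fin 4 → ℚ) : ℂ := (c 0 : ℂ) + c 1 * z + c 2 * z ^ 2 + c 3 * z ^ 3

lemma common_den (c : Fin 4 → ℚ) : ∃ d : ℕ, 0 < d ∧ ∀ i, ∃ m : ℤ, (m : ℚ) = c i * d := by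
  refine ⟨∏ j : Fin 4, (c j).den, Finset.prod_pos fun j _ => (c j).pos, fun i => ?_⟩
  obtain ⟨k, hk⟩ := Finset.dvd_prod_of_mem (fun j => (c j).den) (Finset.mem_univ i)
  refine ⟨(c i).num * k, ?_⟩
  push_cast [hk]
  rw [← mul_assoc, Rat.mul_den_eq_num]

/-- The core arithmetic fact: `x·σx = ±ζ₈ · y·σy` has no nontrivial solutions. -/
lemma core {z : ℂ} (hz : z = ζ₈ ∨ z = -ζ₈) (cu cv cs ct : Fin 4 → ℚ)
    (h : evz z cu ^ 2 + evz z cu * evz z cv - evz z cv ^ 2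
       = z * (evz z cs ^ 2 + evz z cs * evz z ct - evz z ct ^ 2)) :
    cu = 0 ∧ cv = 0 ∧ cs = 0 ∧ ct = 0 := by
  obtain ⟨du, hdu, hu⟩ := common_den cu
  obtain ⟨dv, hdv, hv⟩ := common_den cv
  obtain ⟨ds, hds, hs⟩ := common_den cs
  obtain ⟨dt, hdt, ht⟩ := common_den ct
  set N : ℕ := du * dv * ds * dt with hN
  have hN0 : 0 < N := by positivity
  have hint : ∀ (c : Fin 4 → ℚ), (∀ i, ∃ m : ℤ, (m : ℚ) = c i * du) ∨
      (∀ i, ∃ m : ℤ, (m : ℚ) = c i * dv) ∨ (∀ i, ∃ m : ℤ, (m : ℚ) = c i * ds) ∨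
      (∀ i, ∃ m : ℤ, (m : ℚ) = c i * dt) → True := fun _ _ => trivial
  -- integer coordinates for N * c
  have getm : ∀ (c : Fin 4 → ℚ) (d : ℕ), (∀ i, ∃ m : ℤ, (m : ℚ) = c i * d) → (d ∣ N) →
      ∃ m : Fin 4 → ℤ, ∀ i, (m i : ℚ) = c i * N := by
    intro c d hc hdN
    obtain ⟨k, hk⟩ := hdN
    choose m hm using hc
    refine ⟨fun i => m i * k, fun i => ?_⟩
    have : (c i * N : ℚ) = (c i * d) * k := by rw [hk]; push_cast; ring
    rw [this, ← hm i]
    push_cast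
    ring
  obtain ⟨mu, hmu⟩ := getm cu du hu ⟨dv * ds * dt, by ring⟩
  obtain ⟨mv, hmv⟩ := getm cv dv hv ⟨du * ds * dt, by ring⟩
  obtain ⟨ms, hms⟩ := getm cs ds hs ⟨du * dv * dt, by ring⟩
  obtain ⟨mt, hmt⟩ := getm ct dt ht ⟨du * dv * ds, by ring⟩
  -- complex versions
  have hmuC : ∀ i, (mu i : ℂ) = (cu i : ℂ) * N := fun i => by exact_mod_cast congrArg (fun q : ℚ => (q : ℂ)) (hmu i)
  have hmvC : ∀ i, (mv i : ℂ) = (cv i : ℂ) * N := fun i => by exact_mod_cast congrArg (fun q : ℚ => (q : ℂ)) (hmv i)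
  have hmsC : ∀ i, (ms i : ℂ) = (cs i : ℂ) * N := fun i => by exact_mod_cast congrArg (fun q : ℚ => (q : ℂ)) (hms i)
  have hmtC : ∀ i, (mt i : ℂ) = (ct i : ℂ) * N := fun i => by exact_mod_cast congrArg (fun q : ℚ => (q : ℂ)) (hmt i)
  have hφ : ∀ m : Fin 4 → ℤ, φ z (zsign_pow4 hz) (ι m) =
      (m 0 : ℂ) + (m 1 : ℂ) * z + (m 2 : ℂ) * z ^ 2 + (m 3 : ℂ) * z ^ 3 := φ_ι z _
  have hev : ∀ (m : Fin 4 → ℤ) (c : Fin 4 → ℚ), (∀ i, (m i : ℂ) = (c i : ℂ) * N) →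
      φ z (zsign_pow4 hz) (ι m) = (N : ℂ) * evz z c := by
    intro m c hc
    rw [hφ m, hc 0, hc 1, hc 2, hc 3]
    unfold evz
    ring
  -- the B-level equation
  have hBeq : ι mu ^ 2 + ι mu * ι mv - ι mv ^ 2 - rB * (ι ms ^ 2 + ι ms * ι mt - ι mt ^ 2) = 0 := by
    apply φ_inj hz
    simp only [map_sub, map_add, _root_.map_mul, map_pow, map_zero, φ_root]
    rw [hev mu cu hmuC, hev mv cv hmvC, hev ms cs hmsC, hev mt ct hmtC]
    linear_combination ((N : ℂ))^2 * h
  obtain ⟨hu0, hv0, hs0, ht0⟩ := E1_zero (ι mu) (ι mv) (ι ms) (ι mt) (by linear_combination hBeq)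
  have conc : ∀ (m : Fin 4 → ℤ) (c : Fin 4 → ℚ), (∀ i, (m i : ℚ) = c i * N) → ι m = 0 → c = 0 := by
    intro m c hc h0
    have hm := ι_inj hz m (by rw [h0, map_zero])
    funext i
    have := hc i
    rw [congrFun hm i] at this
    simp only [Int.cast_zero, Pi.zero_apply] at this ⊢
    have hNQ : (N : ℚ) ≠ 0 := by positivity
    rcases mul_eq_zero.1 this.symm with h' | h'
    · exact h'
    · exact absurd h' hNQ
  exact ⟨conc mu cu hmu hu0, conc mv cv hmv hv0, conc ms cs hms hs0, conc mt ct hmt ht0⟩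

lemma detXi_ne (a b : Fin 4 → ℂ) (ha : ∀ i, a i ∈ Qi) (hb : ∀ i, b i ∈ Qi)
    (hab : ¬(emb a = 0 ∧ emb b = 0)) : (Xi a b).det ≠ 0 := by
  intro hdet
  rw [Xi, Matrix.det_fin_two_of] at hdet
  choose pa qa hpa using ha
  choose pb qb hpb using hb
  set cu : Fin 4 → ℚ := ![pa 0, pa 1, qa 0, qa 1] with hcu
  set cv : Fin 4 → ℚ := ![pa 2, pa 3, qa 2, qa 3] with hcv
  set cs : Fin 4 → ℚ := ![pb 0, pb 1, qb 0, qb 1] with hcs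
  set ct : Fin 4 → ℚ := ![pb 2, pb 3, qb 2, qb 3] with hct
  have hI : Complex.I = ζ₈ ^ 2 := zeta_sq.symm
  have hu : a 0 + a 1 * ζ₈ = evz ζ₈ cu := by
    rw [hpa 0, hpa 1]
    simp only [hcu, evz, Matrix.cons_val_zero, Matrix.cons_val_one, Matrix.head_cons,
      Matrix.cons_val_two, Matrix.tail_cons, Matrix.cons_val_three]
    rw [hI]; ring
  have hv : a 2 + a 3 * ζ₈ = evz ζ₈ cv := by
    rw [hpa 2, hpa 3]
    simp only [hcv, evz, Matrix.cons_val_zero, Matrix.cons_val_one, Matrix.head_cons,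
      Matrix.cons_val_two, Matrix.tail_cons, Matrix.cons_val_three]
    rw [hI]; ring
  have hs : b 0 + b 1 * ζ₈ = evz ζ₈ cs := by
    rw [hpb 0, hpb 1]
    simp only [hcs, evz, Matrix.cons_val_zero, Matrix.cons_val_one, Matrix.head_cons,
      Matrix.cons_val_two, Matrix.tail_cons, Matrix.cons_val_three]
    rw [hI]; ring
  have ht : b 2 + b 3 * ζ₈ = evz ζ₈ ct := by
    rw [hpb 2, hpb 3]
    simp only [hct, evz, Matrix.cons_val_zero, Matrix.cons_val_one, Matrix.head_cons,
      Matrix.cons_val_two, Matrix.tail_cons, Matrix.cons_val_three]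
    rw [hI]; ring
  have hembef : emb a = evz ζ₈ cu + evz ζ₈ cv * θ := by
    rw [emb, ← hu, ← hv]; ring
  have hembσf : embσ a = evz ζ₈ cu + evz ζ₈ cv * θbar := by
    rw [embσ, ← hu, ← hv]; ring
  have hembefb : emb b = evz ζ₈ cs + evz ζ₈ ct * θ := by
    rw [emb, ← hs, ← ht]; ring
  have hembσfb : embσ b = evz ζ₈ cs + evz ζ₈ ct * θbar := by
    rw [embσ, ← hs, ← ht]; ring
  have heq : evz ζ₈ cu ^ 2 + evz ζ₈ cu * evz ζ₈ cv - evz ζ₈ cv ^ 2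
      = ζ₈ * (evz ζ₈ cs ^ 2 + evz ζ₈ cs * evz ζ₈ ct - evz ζ₈ ct ^ 2) := by
    rw [hembef, hembσf, hembefb, hembσfb] at hdet
    linear_combination hdet - (evz ζ₈ cu * evz ζ₈ cv - ζ₈ * evz ζ₈ cs * evz ζ₈ ct) * theta_add
      - (evz ζ₈ cv ^ 2 - ζ₈ * evz ζ₈ ct ^ 2) * theta_mul
  obtain ⟨hu0, hv0, hs0, ht0⟩ := core (Or.inl rfl) cu cv cs ct heq
  apply hab
  constructor
  · rw [hembef, hu0, hv0]
    simp [evz]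
  · rw [hembefb, hs0, ht0]
    simp [evz]

lemma detTauXi_ne (a b : Fin 4 → ℂ) (ha : ∀ i, a i ∈ Qi) (hb : ∀ i, b i ∈ Qi)
    (hab : ¬(emb a = 0 ∧ emb b = 0)) : (tauXi a b).det ≠ 0 := by
  intro hdet
  rw [tauXi, Matrix.det_fin_two_of] at hdet
  choose pa qa hpa using ha
  choose pb qb hpb using hb
  set z : ℂ := -ζ₈ with hzdef
  set cu : Fin 4 → ℚ := ![pa 0, pa 1, qa 0, qa 1] with hcu
  set cv : Fin 4 → ℚ := ![pa 2, pa 3, qa 2, qa 3] with hcv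
  set cs : Fin 4 → ℚ := ![pb 0, pb 1, qb 0, qb 1] with hcs
  set ct : Fin 4 → ℚ := ![pb 2, pb 3, qb 2, qb 3] with hct
  have hI : Complex.I = ζ₈ ^ 2 := zeta_sq.symm
  have hu : a 0 - a 1 * ζ₈ = evz z cu := by
    rw [hpa 0, hpa 1]
    simp only [hcu, hzdef, evz, Matrix.cons_val_zero, Matrix.cons_val_one, Matrix.head_cons,
      Matrix.cons_val_two, Matrix.tail_cons, Matrix.cons_val_three]
    rw [hI]; ring
  have hv : a 2 - a 3 * ζ₈ = evz z cv := by
    rw [hpa 2, hpa 3]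
    simp only [hcv, hzdef, evz, Matrix.cons_val_zero, Matrix.cons_val_one, Matrix.head_cons,
      Matrix.cons_val_two, Matrix.tail_cons, Matrix.cons_val_three]
    rw [hI]; ring
  have hs : b 0 - b 1 * ζ₈ = evz z cs := by
    rw [hpb 0, hpb 1]
    simp only [hcs, hzdef, evz, Matrix.cons_val_zero, Matrix.cons_val_one, Matrix.head_cons,
      Matrix.cons_val_two, Matrix.tail_cons, Matrix.cons_val_three]
    rw [hI]; ring
  have ht : b 2 - b 3 * ζ₈ = evz z ct := by
    rw [hpb 2, hpb 3]
    simp only [hct, hzdef, evz, Matrix.cons_val_zero, Matrix.cons_val_one, Matrix.head_cons,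
      Matrix.cons_val_two, Matrix.tail_cons, Matrix.cons_val_three]
    rw [hI]; ring
  have hembef : embτ a = evz z cu + evz z cv * θ := by
    rw [embτ, ← hu, ← hv]; ring
  have hembσf : embστ a = evz z cu + evz z cv * θbar := by
    rw [embστ, ← hu, ← hv]; ring
  have hembefb : embτ b = evz z cs + evz z ct * θ := by
    rw [embτ, ← hs, ← ht]; ring
  have hembσfb : embστ b = evz z cs + evz z ct * θbar := by
    rw [embστ, ← hs, ← ht]; ring
  have heq : evz z cu ^ 2 + evz z cu * evz z cv - evz z cv ^ 2
      = z * (evz z cs ^ 2 + evz z cs * evz z ct - evz z ct ^ 2) := by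
    rw [hembef, hembσf, hembefb, hembσfb] at hdet
    linear_combination hdet - (evz z cu * evz z cv - z * evz z cs * evz z ct) * theta_add
      - (evz z cv ^ 2 - z * evz z ct ^ 2) * theta_mul
  obtain ⟨hu0, hv0, hs0, ht0⟩ := core (Or.inr hzdef) cu cv cs ct heq
  have hvals : ∀ i, a i = 0 ∧ b i = 0 := by
    intro i
    constructor
    · rw [hpa i]
      fin_cases i
      · have h1 := congrFun hu0 0; have h2 := congrFun hu0 2
        simp [hcu] at h1 h2
        simp [h1, h2]
      · have h1 := congrFun hu0 1; have h2 := congrFun hu0 3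
        simp [hcu] at h1 h2
        simp [h1, h2]
      · have h1 := congrFun hv0 0; have h2 := congrFun hv0 2
        simp [hcv] at h1 h2
        simp [h1, h2]
      · have h1 := congrFun hv0 1; have h2 := congrFun hv0 3
        simp [hcv] at h1 h2
        simp [h1, h2]
    · rw [hpb i]
      fin_cases i
      · have h1 := congrFun hs0 0; have h2 := congrFun hs0 2
        simp [hcs] at h1 h2
        simp [h1, h2]
      · have h1 := congrFun hs0 1; have h2 := congrFun hs0 3
        simp [hcs] at h1 h2
        simp [h1, h2]
      · have h1 := congrFun ht0 0; have h2 := congrFun ht0 2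
        simp [hct] at h1 h2
        simp [h1, h2]
      · have h1 := congrFun ht0 1; have h2 := congrFun ht0 3
        simp [hct] at h1 h2
        simp [h1, h2]
  apply hab
  constructor
  · rw [emb, (hvals 0).1, (hvals 1).1, (hvals 2).1, (hvals 3).1]; ring
  · rw [emb, (hvals 0).2, (hvals 1).2, (hvals 2).2, (hvals 3).2]; ring


end
end

end AuxProofs

open Polynomial

/-- Let `γ ∈ ℂ` be transcendental over `ℚ`. For all `x₁, y₁, x₂, y₂ ∈ K = ℚ(ζ₈, √5)` with
`(x₁, y₁) ≠ (0, 0)` and `(x₂, y₂) ≠ (0, 0)`, the joint codeword matrix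
`X = [[Ξ(x₁, y₁), τ(Ξ(x₁, y₁))], [γ·Ξ(x₂, y₂), τ(Ξ(x₂, y₂))]]` has nonzero determinant. -/
theorem joint_codeword_full_rank_transcendental (γ : ℂ) (hγ : Transcendental ℚ γ) :
    ∀ a₁ b₁ a₂ b₂ : Fin 4 → ℂ,
      (∀ i, a₁ i ∈ Qi) → (∀ i, b₁ i ∈ Qi) → (∀ i, a₂ i ∈ Qi) → (∀ i, b₂ i ∈ Qi) →
      ¬(emb a₁ = 0 ∧ emb b₁ = 0) → ¬(emb a₂ = 0 ∧ emb b₂ = 0) →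
      (Matrix.fromBlocks (Xi a₁ b₁) (tauXi a₁ b₁) (γ • Xi a₂ b₂) (tauXi a₂ b₂)).det ≠ 0 := by

  intro a₁ b₁ a₂ b₂ ha₁ hb₁ ha₂ hb₂ hne₁ hne₂ hdet0
  -- the intermediate field L = ℚ(ζ₈, θ)
  set L : IntermediateField ℚ ℂ := IntermediateField.adjoin ℚ {ζ₈, θ} with hL
  have hζint : IsIntegral ℚ ζ₈ := by
    refine ⟨X ^ 8 - 1, ?_, ?_⟩
    · have : (X ^ 8 - 1 : ℚ[X]) = X ^ (7 + 1) - (1 : ℚ[X]) := by ring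
      rw [this]
      exact Polynomial.monic_X_pow_sub (by simpa using Polynomial.degree_one_le.trans (by norm_num))
    · simp only [Polynomial.eval₂_sub, Polynomial.eval₂_pow, Polynomial.eval₂_X,
        Polynomial.eval₂_one]
      have : ζ₈ ^ 8 = (ζ₈ ^ 4) ^ 2 := by ring
      rw [this, zeta_pow4]
      ring
  have hθint : IsIntegral ℚ θ := by
    refine ⟨X ^ 2 - X - 1, ?_, ?_⟩
    · have : (X ^ 2 - X - 1 : ℚ[X]) = X ^ (1 + 1) - (X + 1) := by ring
      rw [this]
      apply Polynomial.monic_X_pow_sub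
      rw [show ((X : ℚ[X]) + 1) = X + C 1 by rw [Polynomial.C_1]]
      rw [Polynomial.degree_X_add_C]
      decide
    · simp only [Polynomial.eval₂_sub, Polynomial.eval₂_pow, Polynomial.eval₂_X,
        Polynomial.eval₂_one]
      linear_combination θ * theta_add - theta_mul
  haveI hLalg : Algebra.IsAlgebraic ℚ L := by
    rw [hL]
    apply IntermediateField.isAlgebraic_adjoin
    intro x hx
    rcases hx with rfl | hx
    · exact hζint
    · rw [Set.mem_singleton_iff] at hx
      rw [hx]
      exact hθint
  have hζL : ζ₈ ∈ L := IntermediateField.subset_adjoin _ _ (Set.mem_insert _ _)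
  have hθL : θ ∈ L := IntermediateField.subset_adjoin _ _ (Set.mem_insert_of_mem _ rfl)
  have hθbarL : θbar ∈ L := by
    have : θbar = 1 - θ := by linear_combination theta_add
    rw [this]
    exact sub_mem (one_mem L) hθL
  have hQiL : ∀ x ∈ Qi, x ∈ L := by
    rintro x ⟨p, q, rfl⟩
    have hIL : Complex.I ∈ L := by
      rw [← zeta_sq]
      exact pow_mem hζL 2
    have hp : (p : ℂ) ∈ L := SubfieldClass.ratCast_mem L p
    have hq : (q : ℂ) ∈ L := SubfieldClass.ratCast_mem L q
    exact add_mem hp (mul_mem hq hIL)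
  have hembL : ∀ c : Fin 4 → ℂ, (∀ i, c i ∈ Qi) →
      emb c ∈ L ∧ embσ c ∈ L ∧ embτ c ∈ L ∧ embστ c ∈ L := by
    intro c hc
    have h0 := hQiL _ (hc 0); have h1 := hQiL _ (hc 1)
    have h2 := hQiL _ (hc 2); have h3 := hQiL _ (hc 3)
    refine ⟨?_, ?_, ?_, ?_⟩
    · exact add_mem (add_mem (add_mem h0 (mul_mem h1 hζL)) (mul_mem h2 hθL))
        (mul_mem (mul_mem h3 hζL) hθL)
    · exact add_mem (add_mem (add_mem h0 (mul_mem h1 hζL)) (mul_mem h2 hθbarL))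
        (mul_mem (mul_mem h3 hζL) hθbarL)
    · exact sub_mem (add_mem (sub_mem h0 (mul_mem h1 hζL)) (mul_mem h2 hθL))
        (mul_mem (mul_mem h3 hζL) hθL)
    · exact sub_mem (add_mem (sub_mem h0 (mul_mem h1 hζL)) (mul_mem h2 hθbarL))
        (mul_mem (mul_mem h3 hζL) hθbarL)
  -- entries of the four blocks are in L
  have hXiL : ∀ (c d : Fin 4 → ℂ), (∀ i, c i ∈ Qi) → (∀ i, d i ∈ Qi) →
      ∀ i j, Xi c d i j ∈ L := by
    intro c d hc hd i j
    obtain ⟨hce, hcσ, -, -⟩ := hembL c hc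
    obtain ⟨hde, hdσ, -, -⟩ := hembL d hd
    fin_cases i <;> fin_cases j <;>
      simp only [Xi, Matrix.cons_val', Matrix.cons_val_zero, Matrix.cons_val_one,
        Matrix.head_cons, Matrix.empty_val', Matrix.cons_val_fin_one, Matrix.head_fin_const] <;>
      first
        | exact hce | exact hde | exact hcσ | exact mul_mem hζL hdσ
  have htauXiL : ∀ (c d : Fin 4 → ℂ), (∀ i, c i ∈ Qi) → (∀ i, d i ∈ Qi) →
      ∀ i j, tauXi c d i j ∈ L := by
    intro c d hc hd i j
    obtain ⟨-, -, hce, hcσ⟩ := hembL c hc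
    obtain ⟨-, -, hde, hdσ⟩ := hembL d hd
    fin_cases i <;> fin_cases j <;>
      simp only [tauXi, Matrix.cons_val', Matrix.cons_val_zero, Matrix.cons_val_one,
        Matrix.head_cons, Matrix.empty_val', Matrix.cons_val_fin_one, Matrix.head_fin_const] <;>
      first
        | exact hce | exact hde | exact hcσ | exact mul_mem (neg_mem hζL) hdσ
  -- lifted matrices over L
  set AL : Matrix (Fin 2) (Fin 2) L := Matrix.of fun i j => (⟨Xi a₁ b₁ i j, hXiL a₁ b₁ ha₁ hb₁ i j⟩ : L) with hAL
  set BL : Matrix (Fin 2) (Fin 2) L := Matrix.of fun i j => (⟨tauXi a₁ b₁ i j, htauXiL a₁ b₁ ha₁ hb₁ i j⟩ : L) with hBL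
  set CL : Matrix (Fin 2) (Fin 2) L := Matrix.of fun i j => (⟨Xi a₂ b₂ i j, hXiL a₂ b₂ ha₂ hb₂ i j⟩ : L) with hCL
  set DL : Matrix (Fin 2) (Fin 2) L := Matrix.of fun i j => (⟨tauXi a₂ b₂ i j, htauXiL a₂ b₂ ha₂ hb₂ i j⟩ : L) with hDL
  have hALmap : AL.map (algebraMap L ℂ) = Xi a₁ b₁ := by ext i j; rfl
  have hBLmap : BL.map (algebraMap L ℂ) = tauXi a₁ b₁ := by ext i j; rfl
  have hCLmap : CL.map (algebraMap L ℂ) = Xi a₂ b₂ := by ext i j; rfl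
  have hDLmap : DL.map (algebraMap L ℂ) = tauXi a₂ b₂ := by ext i j; rfl
  -- the polynomial matrix
  set Mp : Matrix (Fin 2 ⊕ Fin 2) (Fin 2 ⊕ Fin 2) (Polynomial L) :=
    Matrix.fromBlocks (AL.map Polynomial.C) (BL.map Polynomial.C)
      ((Polynomial.X : Polynomial L) • (CL.map Polynomial.C)) (DL.map Polynomial.C) with hMp
  set P : Polynomial L := Mp.det with hP
  -- evaluation at γ
  have hEval : Polynomial.eval₂ (algebraMap L ℂ) γ P =
      (Matrix.fromBlocks (Xi a₁ b₁) (tauXi a₁ b₁) (γ • Xi a₂ b₂) (tauXi a₂ b₂)).det := by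
    have := (Polynomial.eval₂RingHom (algebraMap L ℂ) γ).map_det Mp
    rw [hP]
    rw [show Polynomial.eval₂ (algebraMap L ℂ) γ Mp.det
        = Polynomial.eval₂RingHom (algebraMap L ℂ) γ Mp.det from rfl, this]
    congr 1
    ext i j
    rcases i with i | i <;> rcases j with j | j <;>
      simp [hMp, Matrix.fromBlocks, Matrix.map_apply, Matrix.smul_apply, smul_eq_mul,
        Polynomial.eval₂_mul, Polynomial.eval₂_X, Polynomial.eval₂_C,
        ← hALmap, ← hBLmap, ← hCLmap, ← hDLmap] <;> try ring
  -- constant coefficient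
  have hCoeff : P.coeff 0 = AL.det * DL.det := by
    rw [Polynomial.coeff_zero_eq_eval_zero, hP]
    have := (Polynomial.evalRingHom (0 : L)).map_det Mp
    rw [show Polynomial.eval 0 Mp.det = Polynomial.evalRingHom (0 : L) Mp.det from rfl, this,
      RingHom.mapMatrix_apply]
    have hmap : Mp.map (Polynomial.evalRingHom (0 : L)) = Matrix.fromBlocks AL BL 0 DL := by
      ext i j
      rcases i with i | i <;> rcases j with j | j <;>
        simp [hMp, Matrix.fromBlocks, Matrix.map_apply, Matrix.smul_apply, smul_eq_mul,
          Polynomial.eval_mul, Polynomial.eval_X, Polynomial.eval_C]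
    rw [hmap, Matrix.det_fromBlocks_zero₂₁]
  -- nonvanishing of constant coefficient
  have hA0 : AL.det ≠ 0 := by
    intro h
    apply detXi_ne a₁ b₁ ha₁ hb₁ hne₁
    have := congrArg (algebraMap L ℂ) h
    rw [(algebraMap L ℂ).map_det, RingHom.mapMatrix_apply, hALmap, map_zero] at this
    exact this
  have hD0 : DL.det ≠ 0 := by
    intro h
    apply detTauXi_ne a₂ b₂ ha₂ hb₂ hne₂
    have := congrArg (algebraMap L ℂ) h
    rw [(algebraMap L ℂ).map_det, RingHom.mapMatrix_apply, hDLmap, map_zero] at this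
    exact this
  have hPne : P ≠ 0 := by
    intro h
    rw [h, Polynomial.coeff_zero] at hCoeff
    exact hA0 (mul_eq_zero.1 hCoeff.symm |>.elim id fun h => absurd h hD0)
  -- γ is algebraic over L, hence over ℚ
  have halg : IsAlgebraic L γ := ⟨P, hPne, by rw [Polynomial.aeval_def, hEval]; exact hdet0⟩
  haveI : Algebra.IsIntegral ℚ L := Algebra.isAlgebraic_iff_isIntegral.1 hLalg
  exact hγ (isIntegral_trans γ halg.isIntegral).isAlgebraic
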